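/- Let x ∈ X with M₁(x) > 0, κ ∈ ℝ, let γ : ℝ → [0,∞) be convex on ℝ with its restriction to [0,∞) a CD-function, and let α : X → (0,∞) be such that Ψ_{2,Υ}(f)(x) ≥ κ·Ψ_Υ(f)(x) + α(x)·∑_{y} k(x,y)·γ(f(x)−f(y)) holds for every bounded f : X → ℝ. Then L satisfies CD_Υ(κ,F) at x with F(r) = α(x)·M₁(x)·γ(r/M₁(x)) for r ≥ 0. If moreover 0 < inf_x M₁(x) ≤ sup_x M₁(x) < ∞, α_* := inf_x α(x) > 0, and the displayed inequality holds for all bounded f and all x ∈ X, then L satisfies CD_Υ(κ,F) with F(r) = α_*·(inf_x M₁(x))·γ( r / sup_x M₁(x) ) for r ≥ 0. -/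

import Mathlib

open Real Filter MeasureTheory Set

/-- `Υ(r) = e^r - r - 1`. -/
noncomputable def Ups (r : ℝ) : ℝ := Real.exp r - r - 1

/-- `M₁(x) = ∑_{y ≠ x} k(x,y)`. -/
noncomputable def M1fn {X : Type*} (k : X → X → ℝ) (x : X) : ℝ :=
  ∑' y : {y : X // y ≠ x}, k x y

/-- The Markov generator `L f(x) = ∑_y k(x,y)(f(y) - f(x))`. -/
noncomputable def genOp {X : Type*} (k : X → X → ℝ) (f : X → ℝ) (x : X) : ℝ :=
  ∑' y, k x y * (f y - f x)

/-- `Ψ_Υ(f)(x) = ∑_y k(x,y) Υ(f(y) - f(x))`. -/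
noncomputable def psiUps {X : Type*} (k : X → X → ℝ) (f : X → ℝ) (x : X) : ℝ :=
  ∑' y, k x y * Ups (f y - f x)

/-- `B_{Υ'}(f,g)(x) = ∑_y k(x,y) Υ'(f(y)-f(x)) (g(y)-g(x))`. -/
noncomputable def bUps {X : Type*} (k : X → X → ℝ) (f g : X → ℝ) (x : X) : ℝ :=
  ∑' y, k x y * (Real.exp (f y - f x) - 1) * (g y - g x)

/-- `Ψ_{2,Υ}(f) = (1/2)(L Ψ_Υ(f) - B_{Υ'}(f, L f))`. -/
noncomputable def psi2Ups {X : Type*} (k : X → X → ℝ) (f : X → ℝ) (x : X) : ℝ :=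
  (1/2) * (genOp k (psiUps k f) x - bUps k f (genOp k f) x)

/-- Boundedness of a real-valued function on the state space. -/
def BddFun {X : Type*} (f : X → ℝ) : Prop := ∃ B : ℝ, ∀ x, |f x| ≤ B

/-- The standing assumptions on the transition rates: nonnegative off-diagonal rates,
`M₁(x) < ∞` (summability), `k(x,x) = -M₁(x)`, and `M₂(x) < ∞`. -/
def KernelSetting {X : Type*} (k : X → X → ℝ) : Prop :=
  (∀ x y, x ≠ y → 0 ≤ k x y) ∧
  (∀ x : X, Summable fun y : {y : X // y ≠ x} => k x y) ∧
  (∀ x : X, k x x = -M1fn k x) ∧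
  (∀ x : X, Summable fun y : {y : X // y ≠ x} => k x y * M1fn k y)

/-- A CD-function: continuous and nonnegative on `[0,∞)` with `F(0) = 0`, `F(r)/r`
strictly increasing on `(0,∞)` and `1/F` integrable at `∞`. -/
def IsCDFunction (F : ℝ → ℝ) : Prop :=
  ContinuousOn F (Ici 0) ∧ F 0 = 0 ∧ (∀ r : ℝ, 0 ≤ r → 0 ≤ F r) ∧
  StrictMonoOn (fun r => F r / r) (Ioi 0) ∧
  ∃ c : ℝ, 0 < c ∧ IntegrableOn (fun r => 1 / F r) (Ioi c)

/-- The trivial extension `F₀` of `F : [0,∞) → [0,∞)` by `0` on `(-∞,0)`. -/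
noncomputable def trivExt (F : ℝ → ℝ) : ℝ → ℝ := fun r => if 0 ≤ r then F r else 0

/-- The condition `CD_Υ(κ,F)` at a point `x`. -/
def CDUpsAt {X : Type*} (k : X → X → ℝ) (κ : ℝ) (F : ℝ → ℝ) (x : X) : Prop :=
  ∀ f : X → ℝ, BddFun f →
    κ * psiUps k f x + trivExt F (-genOp k f x) ≤ psi2Ups k f x

/-- The condition `CD_Υ(κ,F)` (at every point). -/
def CDUps {X : Type*} (k : X → X → ℝ) (κ : ℝ) (F : ℝ → ℝ) : Prop :=
  ∀ x : X, CDUpsAt k κ F x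



lemma my_exists_subgrad (γ : ℝ → ℝ) (h : ConvexOn ℝ Set.univ γ) (m : ℝ) :
    ∃ c : ℝ, ∀ t, γ m + c * (t - m) ≤ γ t := by
  set S : Set ℝ := (fun t => (γ m - γ t) / (m - t)) '' Iio m with hS
  have hne : S.Nonempty := ⟨_, ⟨m - 1, by simp, rfl⟩⟩
  have hub : ∀ s ∈ S, s ≤ (γ (m + 1) - γ m) / (m + 1 - m) := by
    rintro s ⟨t, ht, rfl⟩
    have := h.slope_mono_adjacent (mem_univ t) (mem_univ (m+1)) ht (by linarith)
    convert this using 2 <;> ring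
  have hbdd : BddAbove S := ⟨_, hub⟩
  refine ⟨sSup S, fun t => ?_⟩
  rcases lt_trichotomy t m with hlt | rfl | hgt
  · have hle : (γ m - γ t) / (m - t) ≤ sSup S := le_csSup hbdd ⟨t, hlt, rfl⟩
    have h2 : γ m - γ t ≤ sSup S * (m - t) := (div_le_iff₀ (by linarith)).mp hle
    have : sSup S * (t - m) = -(sSup S * (m - t)) := by ring
    linarith
  · simp
  · have hle : sSup S ≤ (γ t - γ m) / (t - m) := by
      refine csSup_le hne ?_
      rintro s ⟨u, hu, rfl⟩
      have := h.slope_mono_adjacent (mem_univ u) (mem_univ t) hu hgt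
      convert this using 2 <;> ring
    have h2 : sSup S * (t - m) ≤ γ t - γ m := by
      have := mul_le_mul_of_nonneg_right hle (by linarith : (0:ℝ) ≤ t - m)
      rwa [div_mul_cancel₀ _ (by linarith : t - m ≠ 0)] at this
    linarith

lemma my_cd_mono (γ : ℝ → ℝ) (h0 : γ 0 = 0) (hnn : ∀ r, 0 ≤ γ r)
    (hsm : StrictMonoOn (fun r => γ r / r) (Ioi 0)) {a b : ℝ} (ha : 0 ≤ a) (hab : a ≤ b) :
    γ a ≤ γ b := by
  rcases eq_or_lt_of_le ha with rfl | hapos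
  · exact h0.le.trans (hnn b)
  rcases eq_or_lt_of_le hab with rfl | hlt
  · exact le_refl _
  have hb : 0 < b := lt_trans hapos hlt
  have hd := (hsm (mem_Ioi.mpr hapos) (mem_Ioi.mpr hb) hlt).le
  calc γ a = (γ a / a) * a := by field_simp
    _ ≤ (γ b / b) * b := by
        exact mul_le_mul hd hab hapos.le (div_nonneg (hnn b) hb.le)
    _ = γ b := by field_simp

lemma my_core {X : Type*} (k : X → X → ℝ) (hk : KernelSetting k)
    (κ : ℝ) (γ : ℝ → ℝ) (hγconv : ConvexOn ℝ Set.univ γ) (hγnonneg : ∀ r : ℝ, 0 ≤ γ r)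
    (α : ℝ) (hα : 0 < α) (x : X) (hM : 0 < M1fn k x)
    (hyp : ∀ f : X → ℝ, BddFun f →
      κ * psiUps k f x + α * (∑' y : {y : X // y ≠ x}, k x y * γ (f x - f y))
        ≤ psi2Ups k f x) :
    CDUpsAt k κ (fun r => α * M1fn k x * γ (r / M1fn k x)) x := by
  intro f hf
  obtain ⟨B, hB⟩ := hf
  have hB0 : 0 ≤ B := le_trans (abs_nonneg _) (hB x)
  have hknn : ∀ y : {y : X // y ≠ x}, 0 ≤ k x y := fun y => hk.1 x y (Ne.symm y.2)
  -- summability of the γ-sum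
  have hγbdd : ∀ t : ℝ, |t| ≤ 2 * B → γ t ≤ max (γ (-(2*B))) (γ (2*B)) := by
    intro t ht
    refine hγconv.le_on_segment (mem_univ _) (mem_univ _) ?_
    rw [segment_eq_Icc (by linarith)]
    rw [abs_le] at ht
    exact ⟨ht.1, ht.2⟩
  have hdiff : ∀ y : X, |f x - f y| ≤ 2 * B := by
    intro y
    have := hB x; have := hB y
    have : |f x - f y| ≤ |f x| + |f y| := abs_sub _ _
    calc |f x - f y| ≤ |f x| + |f y| := abs_sub _ _
      _ ≤ 2 * B := by have := hB x; have := hB y; linarith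
  have Ssum : Summable (fun y : {y : X // y ≠ x} => k x y * γ (f x - f y)) := by
    refine Summable.of_nonneg_of_le (fun y => mul_nonneg (hknn y) (hγnonneg _))
      (fun y => mul_le_mul_of_nonneg_left (hγbdd _ (hdiff y)) (hknn y))
      ((hk.2.1 x).mul_right _)
  have Snn : 0 ≤ ∑' y : {y : X // y ≠ x}, k x y * γ (f x - f y) :=
    tsum_nonneg (fun y => mul_nonneg (hknn y) (hγnonneg _))
  -- summability of the generator sum
  have gsum_sub : Summable (fun y : {y : X // y ≠ x} => k x y * (f y - f x)) := by
    refine Summable.of_norm_bounded ((hk.2.1 x).mul_right (2*B)) (fun y => ?_)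
    rw [norm_mul, Real.norm_of_nonneg (hknn y)]
    refine mul_le_mul_of_nonneg_left ?_ (hknn y)
    have := hdiff y
    rw [Real.norm_eq_abs, abs_sub_comm]
    exact hdiff y
  have gsum_sub' : Summable (fun y : {y : X // y ≠ x} => k x y * (f x - f y)) := by
    have h1 : (fun y : {y : X // y ≠ x} => k x y * (f x - f y))
        = fun y : {y : X // y ≠ x} => -(k x y * (f y - f x)) := by funext y; ring
    rw [h1]; exact gsum_sub.neg
  -- the generator as a sum over y ≠ x
  have hgen : genOp k f x = ∑' y : {y : X // y ≠ x}, k x y * (f y - f x) := by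
    refine (tsum_subtype_eq_of_support_subset ?_).symm
    intro y hy
    simp only [Function.mem_support] at hy
    intro hyx
    apply hy
    rw [hyx]; simp
  have hgen' : ∑' y : {y : X // y ≠ x}, k x y * (f x - f y) = -genOp k f x := by
    rw [hgen]
    have h1 : (fun y : {y : X // y ≠ x} => k x y * (f x - f y))
        = fun y : {y : X // y ≠ x} => -(k x y * (f y - f x)) := by funext y; ring
    rw [h1, tsum_neg]
  -- the key lower bound
  have key : trivExt (fun r => α * M1fn k x * γ (r / M1fn k x)) (-genOp k f x)
      ≤ α * ∑' y : {y : X // y ≠ x}, k x y * γ (f x - f y) := by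
    by_cases hL : 0 ≤ -genOp k f x
    · rw [trivExt, if_pos hL]
      set m : ℝ := -genOp k f x / M1fn k x with hm
      obtain ⟨c, hc⟩ := my_exists_subgrad γ hγconv m
      have hmm : m * M1fn k x = -genOp k f x := div_mul_cancel₀ _ (ne_of_gt hM)
      have h1 : Summable (fun y : {y : X // y ≠ x} =>
          k x y * (γ m - c * m) + c * (k x y * (f x - f y))) :=
        ((hk.2.1 x).mul_right _).add (gsum_sub'.mul_left c)
      have h2 : ∀ y : {y : X // y ≠ x},
          k x y * (γ m - c * m) + c * (k x y * (f x - f y)) ≤ k x y * γ (f x - f y) := by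
        intro y
        have h3 := mul_le_mul_of_nonneg_left (hc (f x - f y)) (hknn y)
        have h4 : k x ↑y * (γ m - c * m) + c * (k x ↑y * (f x - f y))
            = k x ↑y * (γ m + c * (f x - f y - m)) := by ring
        rw [h4]; exact h3
      have h5 := Summable.tsum_le_tsum h2 h1 Ssum
      rw [Summable.tsum_add ((hk.2.1 x).mul_right _) (gsum_sub'.mul_left c),
        tsum_mul_right, tsum_mul_left, hgen'] at h5
      have h6 : (∑' y : {y : X // y ≠ x}, k x y) = M1fn k x := rfl
      rw [h6] at h5
      have h7 : M1fn k x * (γ m - c * m) + c * -genOp k f x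
          = M1fn k x * γ m := by linear_combination (-c) * hmm
      rw [h7] at h5
      calc α * M1fn k x * γ (-genOp k f x / M1fn k x) = α * (M1fn k x * γ m) := by
            rw [mul_assoc]
        _ ≤ α * ∑' y : {y : X // y ≠ x}, k x y * γ (f x - f y) :=
            mul_le_mul_of_nonneg_left h5 hα.le
    · rw [trivExt, if_neg hL]
      exact mul_nonneg hα.le Snn
  have := hyp f ⟨B, hB⟩
  linarith

/-- Proposition 2.7: a convex lower bound `γ` for the dimension term yields a
`CD_Υ(κ,F)` condition via Jensen's inequality, pointwise and globally. -/
theorem stmt_8 {X : Type*} [Countable X] (k : X → X → ℝ) (hk : KernelSetting k)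
    (κ : ℝ) (γ : ℝ → ℝ) (hγconv : ConvexOn ℝ Set.univ γ) (hγnonneg : ∀ r : ℝ, 0 ≤ γ r)
    (hγCD : IsCDFunction γ) (α : X → ℝ) (hαpos : ∀ x, 0 < α x) :
    (∀ x : X, 0 < M1fn k x →
      (∀ f : X → ℝ, BddFun f →
        κ * psiUps k f x + α x * (∑' y : {y : X // y ≠ x}, k x y * γ (f x - f y))
          ≤ psi2Ups k f x) →
      CDUpsAt k κ (fun r => α x * M1fn k x * γ (r / M1fn k x)) x)
    ∧ (∀ Minf Msup αstar : ℝ,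
        IsGLB (Set.range (M1fn k)) Minf → IsLUB (Set.range (M1fn k)) Msup →
        IsGLB (Set.range α) αstar → 0 < Minf → 0 < αstar →
        (∀ (x : X) (f : X → ℝ), BddFun f →
          κ * psiUps k f x + α x * (∑' y : {y : X // y ≠ x}, k x y * γ (f x - f y))
            ≤ psi2Ups k f x) →
        CDUps k κ (fun r => αstar * Minf * γ (r / Msup))) := by
  constructor
  · intro x hM hyp
    exact my_core k hk κ γ hγconv hγnonneg (α x) (hαpos x) x hM hyp
  · intro Minf Msup αstar hglb hlub hglbα hMinf hαstar hyp x
    have hMx : 0 < M1fn k x := lt_of_lt_of_le hMinf (hglb.1 (mem_range_self x))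
    have hcd := my_core k hk κ γ hγconv hγnonneg (α x) (hαpos x) x hMx (fun f hf => hyp x f hf)
    have hax : αstar ≤ α x := hglbα.1 (mem_range_self x)
    have hMle : Minf ≤ M1fn k x := hglb.1 (mem_range_self x)
    have hMs : M1fn k x ≤ Msup := hlub.1 (mem_range_self x)
    have h0 : γ 0 = 0 := hγCD.2.1
    have hsm := hγCD.2.2.2.1
    have hcomp : ∀ r : ℝ, trivExt (fun r => αstar * Minf * γ (r / Msup)) r
        ≤ trivExt (fun r => α x * M1fn k x * γ (r / M1fn k x)) r := by
      intro r
      by_cases h : 0 ≤ r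
      · rw [trivExt, if_pos h]
        rw [trivExt, if_pos h]
        have hγm : γ (r / Msup) ≤ γ (r / M1fn k x) :=
          my_cd_mono γ h0 hγnonneg hsm (div_nonneg h (hMinf.trans_le (hMle.trans hMs)).le)
            (div_le_div_of_nonneg_left h hMx hMs)
        refine mul_le_mul (mul_le_mul hax hMle hMinf.le (hαpos x).le) hγm (hγnonneg _)
          (mul_nonneg (hαpos x).le hMx.le)
      · rw [trivExt, if_neg h]; rw [trivExt, if_neg h]
    intro f hf
    have h1 := hcd f hf
    have h2 := hcomp (-genOp k f x)
    linarith
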